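/- Any signed planar embedding of a finite tree (vertices labeled ±, adjacent vertices having opposite labels) can be transformed into a signed embedding of an almost linear tree by a finite sequence of moves, each of which detaches an end edge from one vertex and reattaches it to another vertex of the same sign. -/

import Mathlib

set_option linter.unusedSectionVars false
set_option linter.unusedVariables false
set_option maxHeartbeats 1000000


open Finset
open scoped Classical

variable {V : Type} [Fintype V] [DecidableEq V]

/-- Valence of a vertex of a graph (number of adjacent vertices). -/
noncomputable def valence (G : SimpleGraph V) (v : V) : ℕ :=
  (Finset.univ.filter fun u => G.Adj v u).card

/-- A tree is almost linear if at most one vertex has valence greater than two,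
and at most one of the edges attached to this vertex is a non-end edge
(i.e. at most one neighbor of it has valence ≥ 2). -/
noncomputable def AlmostLinear (G : SimpleGraph V) : Prop :=
  ∃ w : V, (∀ v : V, v ≠ w → valence G v ≤ 2) ∧
    (Finset.univ.filter fun u => G.Adj w u ∧ 2 ≤ valence G u).card ≤ 1

/-- A proper signing of a graph: adjacent vertices get opposite signs. -/
def ProperSigning (G : SimpleGraph V) (s : V → Bool) : Prop :=
  ∀ u v : V, G.Adj u v → s u ≠ s v

/-- A move detaches the end edge `{x, v}` (`x` an end vertex) from `v` and
reattaches it at another vertex `w` of the same sign as `v`. -/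
noncomputable def Move (s : V → Bool) (G G' : SimpleGraph V) : Prop :=
  ∃ x v w : V, valence G x = 1 ∧ G.Adj x v ∧ s w = s v ∧ w ≠ x ∧ w ≠ v ∧
    G' = (G \ SimpleGraph.fromEdgeSet {s(x, v)}) ⊔ SimpleGraph.fromEdgeSet {s(x, w)}

noncomputable def moveGraph (G : SimpleGraph V) (x v w : V) : SimpleGraph V :=
  (G \ SimpleGraph.fromEdgeSet {s(x, v)}) ⊔ SimpleGraph.fromEdgeSet {s(x, w)}

lemma valence_pos {G : SimpleGraph V} {v u : V} (h : G.Adj v u) : 0 < valence G v :=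
  Finset.card_pos.2 ⟨u, by simp [h]⟩

lemma unique_nbr {G : SimpleGraph V} {x v : V} (hx : valence G x = 1) (hxv : G.Adj x v) :
    ∀ z, G.Adj x z → z = v := by
  intro z hz
  obtain ⟨c, hc⟩ := Finset.card_eq_one.1 hx
  have h1 : v ∈ Finset.univ.filter fun u => G.Adj x u := by simp [hxv]
  have h2 : z ∈ Finset.univ.filter fun u => G.Adj x u := by simp [hz]
  rw [hc, Finset.mem_singleton] at h1 h2
  rw [h2, h1]

lemma moveGraph_adj {G : SimpleGraph V} {x v w : V} (hxw : x ≠ w) (p q : V) :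
    (moveGraph G x v w).Adj p q ↔
      (G.Adj p q ∧ ¬(p = x ∧ q = v) ∧ ¬(p = v ∧ q = x)) ∨
        ((p = x ∧ q = w) ∨ (p = w ∧ q = x)) := by
  have hne : ∀ p q : V, ((p = x ∧ q = w) ∨ (p = w ∧ q = x)) → p ≠ q := by
    rintro p q (⟨rfl, rfl⟩ | ⟨rfl, rfl⟩) h
    · exact hxw h
    · exact hxw h.symm
  simp only [moveGraph, SimpleGraph.sup_adj, SimpleGraph.sdiff_adj,
    SimpleGraph.fromEdgeSet_adj, Set.mem_singleton_iff, Sym2.eq_iff]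
  constructor
  · rintro (⟨h, h2⟩ | ⟨h, _⟩)
    · exact Or.inl ⟨h, fun hc => h2 ⟨Or.inl hc, h.ne⟩, fun hc => h2 ⟨Or.inr hc, h.ne⟩⟩
    · exact Or.inr h
  · rintro (⟨h, h2, h3⟩ | h)
    · exact Or.inl ⟨h, fun hc => by rcases hc.1 with hc' | hc'; exact h2 hc'; exact h3 hc'⟩
    · exact Or.inr ⟨h, hne p q h⟩

section MoveLemmas

variable {G : SimpleGraph V} {x v w : V}
  (hx : valence G x = 1) (hxv : G.Adj x v) (hwx : w ≠ x) (hwv : w ≠ v)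

include hx hxv hwx hwv

lemma moveGraph_adj_x : ∀ z, (moveGraph G x v w).Adj x z ↔ z = w := by
  intro z
  rw [moveGraph_adj (fun h => hwx h.symm)]
  constructor
  · rintro (⟨h, h2, _⟩ | (⟨_, rfl⟩ | ⟨h1, h2⟩))
    · exact absurd ⟨rfl, unique_nbr hx hxv z h⟩ h2
    · rfl
    · exact absurd h1.symm hwx
  · rintro rfl
    exact Or.inr (Or.inl ⟨rfl, rfl⟩)

lemma not_adj_xw : ¬ G.Adj x w := fun h => hwv (unique_nbr hx hxv w h).symm.symm

lemma moveGraph_valence_x : valence (moveGraph G x v w) x = 1 := by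
  rw [valence]
  have : (Finset.univ.filter fun u => (moveGraph G x v w).Adj x u) = {w} := by
    ext z
    simp [moveGraph_adj_x hx hxv hwx hwv z]
  rw [this, Finset.card_singleton]

lemma moveGraph_adj_v (hvx : v ≠ x) : ∀ z, (moveGraph G x v w).Adj v z ↔ G.Adj v z ∧ z ≠ x := by
  intro z
  rw [moveGraph_adj (fun h => hwx h.symm)]
  constructor
  · rintro (⟨h, h2, h3⟩ | (⟨h1, _⟩ | ⟨h1, _⟩))
    · exact ⟨h, fun hz => h3 ⟨rfl, hz⟩⟩
    · exact absurd h1 hvx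
    · exact absurd h1.symm hwv
  · rintro ⟨h, hz⟩
    exact Or.inl ⟨h, fun hc => hvx hc.1, fun hc => hz hc.2⟩

lemma moveGraph_valence_v (hvx : v ≠ x) :
    valence (moveGraph G x v w) v + 1 = valence G v := by
  rw [valence, valence]
  have : (Finset.univ.filter fun u => (moveGraph G x v w).Adj v u)
      = (Finset.univ.filter fun u => G.Adj v u).erase x := by
    ext z
    simp [moveGraph_adj_v hx hxv hwx hwv hvx z, Finset.mem_erase, and_comm]
  rw [this, Finset.card_erase_of_mem (by simp [hxv.symm])]
  have : 0 < (Finset.univ.filter fun u => G.Adj v u).card := Finset.card_pos.2 ⟨x, by simp [hxv.symm]⟩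
  omega

lemma moveGraph_adj_w : ∀ z, (moveGraph G x v w).Adj w z ↔ G.Adj w z ∨ z = x := by
  intro z
  rw [moveGraph_adj (fun h => hwx h.symm)]
  constructor
  · rintro (⟨h, _, _⟩ | (⟨h1, _⟩ | ⟨_, h2⟩))
    · exact Or.inl h
    · exact absurd h1 hwx
    · exact Or.inr h2
  · rintro (h | rfl)
    · exact Or.inl ⟨h, fun hc => hwx hc.1.symm.symm, fun hc => hwv hc.1.symm.symm⟩
    · exact Or.inr (Or.inr ⟨rfl, rfl⟩)

lemma moveGraph_valence_w :
    valence (moveGraph G x v w) w = valence G w + 1 := by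
  rw [valence, valence]
  have : (Finset.univ.filter fun u => (moveGraph G x v w).Adj w u)
      = insert x (Finset.univ.filter fun u => G.Adj w u) := by
    ext z
    simp only [Finset.mem_filter, Finset.mem_univ, true_and, Finset.mem_insert,
      moveGraph_adj_w hx hxv hwx hwv z]
    tauto
  rw [this, Finset.card_insert_of_notMem (by simp; exact fun h => not_adj_xw hx hxv hwx hwv h.symm)]

lemma moveGraph_adj_other {u : V} (hu1 : u ≠ v) (hu2 : u ≠ w) :
    ∀ z, (moveGraph G x v w).Adj u z ↔ (G.Adj u z ∧ ¬(u = x ∧ z = v)) ∨ (u = x ∧ z = w) := by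
  intro z
  rw [moveGraph_adj (fun h => hwx h.symm)]
  constructor
  · rintro (⟨h, h2, h3⟩ | (h | h))
    · exact Or.inl ⟨h, h2⟩
    · exact Or.inr h
    · exact absurd h.1 hu2
  · rintro (⟨h, h2⟩ | h)
    · exact Or.inl ⟨h, h2, fun hc => hu1 hc.1⟩
    · exact Or.inr (Or.inl h)

lemma moveGraph_valence_other {u : V} (hux : u ≠ x) (hu1 : u ≠ v) (hu2 : u ≠ w) :
    valence (moveGraph G x v w) u = valence G u := by
  rw [valence, valence]
  congr 1
  apply Finset.filter_congr
  intro z _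
  rw [moveGraph_adj_other hx hxv hwx hwv hu1 hu2 z]
  constructor
  · rintro (⟨h, _⟩ | ⟨h1, _⟩)
    · exact h
    · exact absurd h1 hux
  · intro h
    exact Or.inl ⟨h, fun hc => hux hc.1⟩

end MoveLemmas

section MoveTree

variable {G : SimpleGraph V} {x v w : V}
  (hx : valence G x = 1) (hxv : G.Adj x v) (hwx : w ≠ x) (hwv : w ≠ v)

include hx hxv hwx hwv

lemma moveGraph_signing {s : V → Bool} (hs : ProperSigning G s) (hsw : s w = s v) :
    ProperSigning (moveGraph G x v w) s := by
  intro p q hpq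
  rw [moveGraph_adj (fun h => hwx h.symm)] at hpq
  rcases hpq with ⟨h, _, _⟩ | (⟨hp1, hq1⟩ | ⟨hp1, hq1⟩)
  · exact hs p q h
  · rw [hp1, hq1, hsw]; exact hs x v hxv
  · rw [hp1, hq1, hsw]; exact fun h => hs x v hxv h.symm

lemma path_avoids {u1 u2 : V} {p : G.Walk u1 u2} (hp : p.IsPath)
    (h1 : u1 ≠ x) (h2 : u2 ≠ x) : x ∉ p.support := by
  induction p with
  | nil => simpa using Ne.symm h1
  | @cons a y b h q ih =>
    rw [SimpleGraph.Walk.support_cons, List.mem_cons]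
    rintro (heq | hxq)
    · exact h1 heq.symm
    · rw [SimpleGraph.Walk.cons_isPath_iff] at hp
      by_cases hy : x = y
      · subst hy
        -- q : G.Walk x b, h : G.Adj a x
        have hb : b ≠ x := h2
        obtain ⟨z, hz, q', hq'⟩ := SimpleGraph.Walk.exists_eq_cons_of_ne (fun hc => hb hc.symm) q
        have hzv : z = v := unique_nbr hx hxv z hz
        have hav : a = v := unique_nbr hx hxv a h.symm
        have : a ∈ q.support := by
          rw [hq', SimpleGraph.Walk.support_cons]
          right
          rw [hav, ← hzv]
          exact q'.start_mem_support
        exact hp.2 this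
      · exact ih hp.1 (fun hc => hy hc.symm) h2 hxq

lemma moveGraph_edges_of_avoid {u1 u2 : V} {p : G.Walk u1 u2} (hsup : x ∉ p.support) :
    ∀ e ∈ p.edges, e ∈ (moveGraph G x v w).edgeSet := by
  intro e he
  induction e using Sym2.ind with
  | _ a b =>
    have hG : G.Adj a b := p.adj_of_mem_edges he
    have hax : a ≠ x := fun hc => hsup (hc ▸ p.fst_mem_support_of_mem_edges he)
    have hbx : b ≠ x := fun hc => hsup (hc ▸ p.snd_mem_support_of_mem_edges he)
    rw [SimpleGraph.mem_edgeSet, moveGraph_adj (fun h => hwx h.symm)]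
    exact Or.inl ⟨hG, fun hc => hax hc.1, fun hc => hbx hc.2⟩

lemma moveGraph_connected (hG : G.IsTree) : (moveGraph G x v w).Connected := by
  have hreach : ∀ u1 u2 : V, u1 ≠ x → u2 ≠ x → (moveGraph G x v w).Reachable u1 u2 := by
    intro u1 u2 h1 h2
    obtain ⟨p⟩ := hG.isConnected u1 u2
    have hp := p.toPath.2
    have hsup : x ∉ (p.toPath : G.Walk u1 u2).support := path_avoids hx hxv hwx hwv hp h1 h2
    exact ⟨(p.toPath : G.Walk u1 u2).transfer _ (moveGraph_edges_of_avoid hx hxv hwx hwv hsup)⟩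
  have hxw' : (moveGraph G x v w).Adj x w := by
    rw [moveGraph_adj_x hx hxv hwx hwv]
  have : Nonempty V := ⟨x⟩
  refine SimpleGraph.Connected.mk ?_
  intro u1 u2
  · by_cases h1 : u1 = x <;> by_cases h2 : u2 = x
    · subst h1; subst h2; rfl
    · subst h1
      exact hxw'.reachable.trans (hreach w u2 hwx h2)
    · subst h2
      exact (hreach u1 w h1 hwx).trans hxw'.symm.reachable
    · exact hreach u1 u2 h1 h2

lemma moveGraph_acyclic (hG : G.IsTree) : (moveGraph G x v w).IsAcyclic := by
  intro u c hc
  by_cases hxc : x ∈ c.support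
  · have hd := hc.rotate hxc
    set d := c.rotate x hxc with hdd
    have hne : ¬ d.Nil := by
      have h3 := hd.three_le_length
      rw [SimpleGraph.Walk.nil_iff_length_eq]
      omega
    obtain ⟨y, hy, q, hq⟩ := SimpleGraph.Walk.not_nil_iff.1 hne
    have hyw : y = w := by
      have h' := hy
      rwa [moveGraph_adj_x hx hxv hwx hwv] at h'
    have hqlen : 1 ≤ q.length := by
      have h3 := hd.three_le_length
      have hlq : d.length = q.length + 1 := by rw [hq]; simp
      omega
    obtain ⟨z, hz, q2, hq2⟩ := SimpleGraph.Walk.exists_eq_cons_of_ne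
      (by rw [hyw]; exact fun hc' => hwx hc'.symm) q.reverse
    have hzy : z = y := by
      have h' := hz
      rw [moveGraph_adj_x hx hxv hwx hwv] at h'
      rw [h', hyw]
    subst hzy
    have hq2len : 1 ≤ q2.length := by
      have : q.reverse.length = q2.length + 1 := by rw [hq2]; simp
      rw [SimpleGraph.Walk.length_reverse] at this
      have h3 := hd.three_le_length
      have hlq : d.length = q.length + 1 := by rw [hq]; simp
      omega
    have hq2nil : ¬ q2.Nil := by
      rw [SimpleGraph.Walk.nil_iff_length_eq]; omega
    obtain ⟨y2, hy2, q3, hq3⟩ := SimpleGraph.Walk.not_nil_iff.1 hq2nil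
    have hznodup : ¬ q2.support.Nodup := by
      rw [hq3, SimpleGraph.Walk.support_cons]
      intro hnd
      exact (List.nodup_cons.1 hnd).1 q3.end_mem_support
    have hnodup : d.support.tail.Nodup := hd.2
    have hqsup : d.support.tail = q.support := by rw [hq]; simp
    rw [hqsup] at hnodup
    have : q.reverse.support.Nodup := by
      rw [SimpleGraph.Walk.support_reverse, List.nodup_reverse]
      exact hnodup
    rw [hq2, SimpleGraph.Walk.support_cons, List.nodup_cons] at this
    exact hznodup this.2
  · -- cycle avoids x, transfer to G
    have hedges : ∀ e ∈ c.edges, e ∈ G.edgeSet := by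
      intro e he
      induction e using Sym2.ind with
      | _ a b =>
        have hadj : (moveGraph G x v w).Adj a b := c.adj_of_mem_edges he
        have hax : a ≠ x := fun hc' => hxc (hc' ▸ c.fst_mem_support_of_mem_edges he)
        have hbx : b ≠ x := fun hc' => hxc (hc' ▸ c.snd_mem_support_of_mem_edges he)
        rw [moveGraph_adj (fun h => hwx h.symm)] at hadj
        rcases hadj with ⟨h, _, _⟩ | (⟨h1, _⟩ | ⟨_, h2⟩)
        · exact h
        · exact absurd h1 hax
        · exact absurd h2 hbx
    exact hG.IsAcyclic (c.transfer G hedges) (hc.transfer hedges)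

lemma moveGraph_isTree (hG : G.IsTree) : (moveGraph G x v w).IsTree :=
  ⟨moveGraph_connected hx hxv hwx hwv hG, moveGraph_acyclic hx hxv hwx hwv hG⟩

end MoveTree

section Parity

variable {G : SimpleGraph V} {s : V → Bool}

lemma walk_parity (hs : ProperSigning G s) :
    ∀ {u v : V} (p : G.Walk u v), (s u = s v ↔ Even p.length) := by
  intro u v p
  induction p with
  | nil => simp
  | @cons a y b h q ih =>
    rw [SimpleGraph.Walk.length_cons, Nat.even_add_one, ← ih]
    have hne := hs _ _ h
    cases hbu : s a <;> cases hby : s y <;> cases hbv : s b <;> simp_all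

lemma dist_parity (hconn : G.Connected) (hs : ProperSigning G s) (u v : V) :
    s u = s v ↔ Even (G.dist u v) := by
  obtain ⟨p, hp⟩ := hconn.exists_walk_length_eq_dist u v
  rw [← hp]
  exact walk_parity hs p

lemma dist_adj_step (hconn : G.Connected) (hs : ProperSigning G s) {r u v : V}
    (h : G.Adj u v) : G.dist r v = G.dist r u + 1 ∨ G.dist r u = G.dist r v + 1 := by
  have h1 : G.dist r v ≤ G.dist r u + 1 := by
    have := hconn.dist_triangle (u := r) (v := u) (w := v)
    rwa [SimpleGraph.dist_eq_one_iff_adj.2 h] at this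
  have h2 : G.dist r u ≤ G.dist r v + 1 := by
    have := hconn.dist_triangle (u := r) (v := v) (w := u)
    rwa [SimpleGraph.dist_eq_one_iff_adj.2 h.symm] at this
  have hne : G.dist r u ≠ G.dist r v := by
    intro hc
    have p1 := dist_parity hconn hs r u
    have p2 := dist_parity hconn hs r v
    rw [hc] at p1
    have hsu := hs _ _ h
    have : s u = s v := by
      rw [← p1] at p2
      cases hbu : s r <;> cases hby : s u <;> cases hbv : s v <;> simp_all
    exact hsu this
  omega

lemma unique_parent (hG : G.IsTree) {r u1 u2 e : V}
    (h1 : G.Adj e u1) (h2 : G.Adj e u2)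
    (hd1 : G.dist r u1 + 1 = G.dist r e) (hd2 : G.dist r u2 + 1 = G.dist r e) :
    u1 = u2 := by
  have hconn := hG.isConnected
  have key : ∀ u : V, G.Adj e u → G.dist r u + 1 = G.dist r e →
      ∃ (q : G.Walk r e), q.IsPath ∧ q.reverse.getVert 1 = u := by
    intro u hu hd
    obtain ⟨p, hp, hlen⟩ := hconn.exists_path_of_dist r u
    have hesup : e ∉ p.support := by
      intro hmem
      have hle : G.dist r e ≤ (p.takeUntil e hmem).length := SimpleGraph.dist_le _
      have := SimpleGraph.Walk.length_takeUntil_le p hmem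
      omega
    refine ⟨p.concat hu.symm, ?_, ?_⟩
    · rw [← SimpleGraph.Walk.isPath_reverse_iff, SimpleGraph.Walk.reverse_concat,
        SimpleGraph.Walk.cons_isPath_iff]
      refine ⟨hp.reverse, ?_⟩
      rwa [SimpleGraph.Walk.support_reverse, List.mem_reverse]
    · rw [SimpleGraph.Walk.reverse_concat, SimpleGraph.Walk.getVert_cons _ _ one_ne_zero]
      simp
  obtain ⟨q1, hq1, hg1⟩ := key u1 h1 hd1
  obtain ⟨q2, hq2, hg2⟩ := key u2 h2 hd2
  have := hG.IsAcyclic.path_unique ⟨q1, hq1⟩ ⟨q2, hq2⟩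
  have hqq : q1 = q2 := congrArg Subtype.val this
  rw [← hg1, ← hg2, hqq]

end Parity

lemma bool_third {p q r : Bool} (h1 : p ≠ r) (h2 : q ≠ r) : p = q := by
  cases p <;> cases q <;> cases r <;> simp_all

lemma two_le_valence_iff {G : SimpleGraph V} {v : V} :
    2 ≤ valence G v ↔ ∃ a b, G.Adj v a ∧ G.Adj v b ∧ a ≠ b := by
  rw [valence, show (2:ℕ) ≤ _ ↔ 1 < _ from Iff.rfl, Finset.one_lt_card]
  constructor
  · rintro ⟨a, ha, b, hb, hab⟩
    simp only [Finset.mem_filter] at ha hb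
    exact ⟨a, b, ha.2, hb.2, hab⟩
  · rintro ⟨a, b, ha, hb, hab⟩
    exact ⟨a, by simp [ha], b, by simp [hb], hab⟩

lemma valence_le_one_of_subsingleton {G : SimpleGraph V} {v : V}
    (h : ∀ z z', G.Adj v z → G.Adj v z' → z = z') : valence G v ≤ 1 := by
  rw [valence, Finset.card_le_one]
  intro z hz z' hz'
  simp only [Finset.mem_filter] at hz hz'
  exact h z z' hz.2 hz'.2

lemma valence_eq_one_of_adj {G : SimpleGraph V} {v u : V} (h : G.Adj v u)
    (hle : valence G v ≤ 1) : valence G v = 1 :=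
  le_antisymm hle (valence_pos h)

/-- The invariant maintained in phase B of the algorithm. -/
def Jinv (s : V → Bool) (a b : V) (G : SimpleGraph V) : Prop :=
  G.Adj a b ∧ (∀ v, v ≠ a → v ≠ b → valence G v ≤ 2) ∧
    (∀ u, G.Adj a u → u = b ∨ valence G u ≤ 1) ∧
    (∀ u u', G.Adj b u → u ≠ a → 2 ≤ valence G u →
      G.Adj b u' → u' ≠ a → 2 ≤ valence G u' → u = u')

noncomputable def Mfun (s : V → Bool) (a b : V) (G : SimpleGraph V) : ℕ :=
  if Jinv s a b G then valence G a + valence G b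
  else 2 * Fintype.card V + ∑ v ∈ Finset.univ.filter (fun v => v ≠ a ∧ v ≠ b), valence G v

lemma terminal_hub_a {G : SimpleGraph V} {s : V → Bool} {a b : V}
    (hJ : Jinv s a b G) (hb2 : valence G b ≤ 2) : AlmostLinear G := by
  refine ⟨a, fun v hv => ?_, ?_⟩
  · by_cases hvb : v = b
    · rw [hvb]; exact hb2
    · exact hJ.2.1 v hv hvb
  · refine le_trans (Finset.card_le_card (fun u hu => ?_)) (Finset.card_singleton b).le
    simp only [Finset.mem_filter, Finset.mem_singleton] at hu ⊢
    rcases hJ.2.2.1 u hu.2.1 with h | h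
    · exact h
    · omega
lemma terminal_hub_b {G : SimpleGraph V} {s : V → Bool} {a b : V}
    (hJ : Jinv s a b G) (ha1 : valence G a ≤ 1) : AlmostLinear G := by
  refine ⟨b, fun v hv => ?_, ?_⟩
  · by_cases hva : v = a
    · rw [hva]; omega
    · exact hJ.2.1 v hva hv
  · rw [Finset.card_le_one]
    intro u hu u' hu'
    simp only [Finset.mem_filter] at hu hu'
    have hua : u ≠ a := by rintro rfl; omega
    have hua' : u' ≠ a := by rintro rfl; omega
    exact hJ.2.2.2 u u' hu.2.1 hua hu.2.2 hu'.2.1 hua' hu'.2.2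


lemma all_parents_leaf {G : SimpleGraph V} {r v : V} (hG : G.IsTree)
    (hv : ∀ z, G.Adj v z → G.dist r z + 1 = G.dist r v) : valence G v ≤ 1 :=
  valence_le_one_of_subsingleton fun z z' hz hz' =>
    unique_parent hG hz hz' (hv z hz) (hv z' hz')

lemma farthest_leaf {G : SimpleGraph V} {s : V → Bool} (hG : G.IsTree)
    (hs : ProperSigning G s) {r e : V}
    (hmax : ∀ z, G.dist r z ≤ G.dist r e) (hne : e ≠ r) :
    ∃ u, G.Adj e u ∧ G.dist r u + 1 = G.dist r e ∧ ∀ z, G.Adj e z → z = u := by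
  have hconn := hG.isConnected
  have hparents : ∀ z, G.Adj e z → G.dist r z + 1 = G.dist r e := by
    intro z hz
    rcases dist_adj_step hconn hs (r := r) hz with h | h
    · have := hmax z
      omega
    · omega
  obtain ⟨p, hp⟩ := (hconn r e).exists_walk_length_eq_dist
  obtain ⟨z0, hz0, q, hq⟩ := SimpleGraph.Walk.exists_eq_cons_of_ne hne p.reverse
  refine ⟨z0, hz0, hparents z0 hz0, fun z hz => ?_⟩
  exact unique_parent hG hz hz0 (hparents z hz) (hparents z0 hz0)

lemma valence_le_card {G : SimpleGraph V} (v : V) : valence G v ≤ Fintype.card V :=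
  le_trans (Finset.card_filter_le _ _) (by rw [Finset.card_univ])

lemma main_induction (s : V → Bool) (a b : V) :
    ∀ n : ℕ, ∀ G : SimpleGraph V, G.IsTree → ProperSigning G s → G.Adj a b →
      Mfun s a b G ≤ n →
      ∃ G', Relation.ReflTransGen (Move s) G G' ∧ G'.IsTree ∧ ProperSigning G' s ∧
        AlmostLinear G' := by
  intro n
  induction n with
  | zero =>
    intro G hG hs hab hM
    exfalso
    have h1 : 0 < valence G a := valence_pos hab
    rw [Mfun] at hM
    split_ifs at hM with h
    · omega
    · have : 0 < Fintype.card V := Fintype.card_pos_iff.2 ⟨a⟩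
      omega
  | succ n ih =>
    intro G hG hs hab hM
    have hsab : s a ≠ s b := hs a b hab
    have hstep : ∀ x v w : V, valence G x = 1 → G.Adj x v → s w = s v → w ≠ x → w ≠ v →
        (moveGraph G x v w).Adj a b → Mfun s a b (moveGraph G x v w) ≤ n →
        ∃ G', Relation.ReflTransGen (Move s) G G' ∧ G'.IsTree ∧ ProperSigning G' s ∧
          AlmostLinear G' := by
      intro x v w h1 h2 h3 h4 h5 h6 h7
      obtain ⟨G', hr, ht, hp, hal⟩ := ih (moveGraph G x v w)
        (moveGraph_isTree h1 h2 h4 h5 hG) (moveGraph_signing h1 h2 h4 h5 hs h3) h6 h7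
      exact ⟨G', Relation.ReflTransGen.head ⟨x, v, w, h1, h2, h3, h4, h5, rfl⟩ hr, ht, hp, hal⟩
    by_cases hJ : Jinv s a b G
    · by_cases hb2 : valence G b ≤ 2
      · exact ⟨G, Relation.ReflTransGen.refl, hG, hs, terminal_hub_a hJ hb2⟩
      · by_cases ha1 : valence G a ≤ 1
        · exact ⟨G, Relation.ReflTransGen.refl, hG, hs, terminal_hub_b hJ ha1⟩
        · -- phase B : valence G b ≥ 3, valence G a ≥ 2
          push_neg at hb2 ha1
          -- get y : leaf neighbor of a distinct from b
          obtain ⟨y, hay, hyb, hy1⟩ : ∃ y, G.Adj a y ∧ y ≠ b ∧ valence G y = 1 := by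
            obtain ⟨z1, z2, hz1, hz2, hne⟩ := two_le_valence_iff.1 ha1
            have hone : ∃ z, G.Adj a z ∧ z ≠ b := by
              by_cases h1 : z1 = b
              · exact ⟨z2, hz2, fun hc => hne (h1.trans hc.symm)⟩
              · exact ⟨z1, hz1, h1⟩
            obtain ⟨z, hz, hzb⟩ := hone
            refine ⟨z, hz, hzb, valence_eq_one_of_adj hz.symm ?_⟩
            rcases hJ.2.2.1 z hz with h | h
            · exact absurd h hzb
            · exact h
          -- get x : leaf neighbor of b distinct from a
          obtain ⟨x, hbx, hxa, hx1⟩ : ∃ x, G.Adj b x ∧ x ≠ a ∧ valence G x = 1 := by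
            have hcard : 2 ≤ ((Finset.univ.filter fun u => G.Adj b u).erase a).card := by
              have h1 := Finset.pred_card_le_card_erase
                (s := Finset.univ.filter fun u => G.Adj b u) (a := a)
              have : 3 ≤ (Finset.univ.filter fun u => G.Adj b u).card := hb2
              omega
            obtain ⟨u, hu, u', hu', huu⟩ := Finset.one_lt_card.1 hcard
            simp only [Finset.mem_erase, Finset.mem_filter] at hu hu'
            by_cases hv : valence G u ≤ 1
            · exact ⟨u, hu.2.2, hu.1, valence_eq_one_of_adj hu.2.2.symm hv⟩
            · by_cases hv' : valence G u' ≤ 1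
              · exact ⟨u', hu'.2.2, hu'.1, valence_eq_one_of_adj hu'.2.2.symm hv'⟩
              · exact absurd (hJ.2.2.2 u u' hu.2.2 hu.1 (by omega) hu'.2.2 hu'.1 (by omega)) huu
          have hxb : x ≠ b := hbx.symm.ne
          have hya : y ≠ a := hay.symm.ne
          have hsx : s x = s a := bool_third (hs b x hbx).symm hsab
          have hsy : s y = s b := bool_third (hs a y hay).symm hsab.symm
          have hnax : ¬ G.Adj a x := by
            intro hc
            exact hab.ne (unique_nbr hx1 hbx.symm a hc.symm).symm.symm
          by_cases hc : ∃ c, G.Adj b c ∧ c ≠ a ∧ 2 ≤ valence G c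
          · obtain ⟨c, hbc, hca, hc2⟩ := hc
            have hconn := hG.isConnected
            obtain ⟨d0, hcd0, hd0b⟩ : ∃ d0, G.Adj c d0 ∧ d0 ≠ b := by
              obtain ⟨z1, z2, hz1, hz2, hne⟩ := two_le_valence_iff.1 hc2
              by_cases h1 : z1 = b
              · exact ⟨z2, hz2, fun hcq => hne (h1.trans hcq.symm)⟩
              · exact ⟨z1, hz1, h1⟩
            have hsd0 : s d0 = s b := by
              have h1 : s d0 ≠ s c := fun h => hs c d0 hcd0 h.symm
              have h2 : s b ≠ s c := fun h => hs b c hbc h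
              exact bool_third h1 h2
            have hd0a : d0 ≠ a := by
              intro h
              apply hsab
              rw [← h]
              exact hsd0
            have hnad0 : ¬ G.Adj a d0 := by
              intro hcon
              rcases hJ.2.2.1 d0 hcon with h | h
              · exact hd0b h
              · have : 2 ≤ valence G d0 :=
                  two_le_valence_iff.2 ⟨c, a, hcd0.symm, hcon.symm, hca⟩
                omega
            have hdist_d0 : 3 ≤ G.dist a d0 := by
              have hodd : ¬ Even (G.dist a d0) := by
                rw [← dist_parity hconn hs a d0]
                intro h; exact hsab (h.trans hsd0)
              have h0 : G.dist a d0 ≠ 0 :=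
                SimpleGraph.dist_ne_zero_iff_ne_and_reachable.2
                  ⟨Ne.symm hd0a, hconn a d0⟩
              have h1 : G.dist a d0 ≠ 1 :=
                fun h => hnad0 (SimpleGraph.dist_eq_one_iff_adj.1 h)
              have h2 : G.dist a d0 ≠ 2 := fun h => hodd (by rw [h]; exact even_two)
              omega
            obtain ⟨e, -, hmax0⟩ := Finset.exists_max_image Finset.univ (G.dist a)
              ⟨a, Finset.mem_univ a⟩
            have hmax : ∀ z, G.dist a z ≤ G.dist a e := fun z => hmax0 z (Finset.mem_univ z)
            have hd3 : 3 ≤ G.dist a e := le_trans hdist_d0 (hmax d0)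
            have hea : e ≠ a := by rintro rfl; rw [SimpleGraph.dist_self] at hd3; omega
            have hdab : G.dist a b = 1 := SimpleGraph.dist_eq_one_iff_adj.2 hab
            have heb : e ≠ b := by rintro rfl; omega
            have hnae : ¬ G.Adj a e := fun h => by
              have := SimpleGraph.dist_eq_one_iff_adj.2 h
              omega
            have hnbe : ¬ G.Adj b e := by
              intro h
              have htri := hconn.dist_triangle (u := a) (v := b) (w := e)
              rw [hdab, SimpleGraph.dist_eq_one_iff_adj.2 h] at htri
              omega
            obtain ⟨u0, heu0, -, huniq⟩ := farthest_leaf hG hs hmax hea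
            have he1 : valence G e = 1 := valence_eq_one_of_adj heu0
              (valence_le_one_of_subsingleton
                (fun z z' hz hz' => (huniq z hz).trans (huniq z' hz').symm))
            by_cases hse : s e = s b
            · -- move x from b to e
              have hex : e ≠ x := fun h => hnbe (h ▸ hbx)
              have hhx : G.Adj x b := hbx.symm
              have hv_b : valence (moveGraph G x b e) b + 1 = valence G b :=
                moveGraph_valence_v hx1 hhx hex heb (Ne.symm hxb)
              have hv_e : valence (moveGraph G x b e) e = 2 := by
                rw [moveGraph_valence_w hx1 hhx hex heb, he1]
              have hv_x : valence (moveGraph G x b e) x = 1 :=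
                moveGraph_valence_x hx1 hhx hex heb
              have hvsame : ∀ u, u ≠ b → u ≠ e →
                  valence (moveGraph G x b e) u = valence G u := by
                intro u hub hue
                by_cases hux : u = x
                · rw [hux, hv_x, hx1]
                · exact moveGraph_valence_other hx1 hhx hex heb hux hub hue
              have hadj_b : ∀ z, (moveGraph G x b e).Adj b z ↔ G.Adj b z ∧ z ≠ x :=
                moveGraph_adj_v hx1 hhx hex heb (Ne.symm hxb)
              have hadj_a : ∀ z, (moveGraph G x b e).Adj a z ↔ G.Adj a z := by
                intro z
                rw [moveGraph_adj_other hx1 hhx hex heb (hab.ne) (Ne.symm hea)]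
                constructor
                · rintro (⟨h, -⟩ | ⟨h1, -⟩)
                  · exact h
                  · exact absurd h1.symm hxa
                · intro h
                  exact Or.inl ⟨h, fun hcc => hxa hcc.1.symm⟩
              have hab' : (moveGraph G x b e).Adj a b := by
                rw [hadj_a b]; exact hab
              have hJ' : Jinv s a b (moveGraph G x b e) := by
                refine ⟨hab', ?_, ?_, ?_⟩
                · intro v hva hvb
                  by_cases hve : v = e
                  · rw [hve, hv_e]
                  · rw [hvsame v hvb hve]
                    exact hJ.2.1 v hva hvb
                · intro u hu
                  rw [hadj_a u] at hu
                  rcases hJ.2.2.1 u hu with h | h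
                  · exact Or.inl h
                  · right
                    have hue : u ≠ e := fun hcc => hnae (hcc ▸ hu)
                    have hub : u ≠ b := by rintro rfl; omega
                    rw [hvsame u hub hue]; exact h
                · intro u u' hu hua hu2 hu' hua' hu2'
                  rw [hadj_b u] at hu
                  rw [hadj_b u'] at hu'
                  have hue : u ≠ e := fun hcc => hnbe (hcc ▸ hu.1)
                  have hue' : u' ≠ e := fun hcc => hnbe (hcc ▸ hu'.1)
                  have hub : u ≠ b := hu.1.ne'
                  have hub' : u' ≠ b := hu'.1.ne'
                  rw [hvsame u hub hue] at hu2
                  rw [hvsame u' hub' hue'] at hu2'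
                  exact hJ.2.2.2 u u' hu.1 hua hu2 hu'.1 hua' hu2'
              have hMlt : Mfun s a b (moveGraph G x b e) ≤ n := by
                have h3 : valence (moveGraph G x b e) a = valence G a :=
                  hvsame a (hab.ne) (Ne.symm hea)
                rw [Mfun, if_pos hJ] at hM
                rw [Mfun, if_pos hJ']
                omega
              exact hstep x b e hx1 hhx hse hex heb hab' hMlt
            · -- move y from a to e
              have hse2 : s e = s a := bool_third hse hsab
              have hey : e ≠ y := fun h => hnae (h ▸ hay)
              have hhy : G.Adj y a := hay.symm
              have hv_a : valence (moveGraph G y a e) a + 1 = valence G a :=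
                moveGraph_valence_v hy1 hhy hey hea (Ne.symm hya)
              have hv_e : valence (moveGraph G y a e) e = 2 := by
                rw [moveGraph_valence_w hy1 hhy hey hea, he1]
              have hv_y : valence (moveGraph G y a e) y = 1 :=
                moveGraph_valence_x hy1 hhy hey hea
              have hvsame : ∀ u, u ≠ a → u ≠ e →
                  valence (moveGraph G y a e) u = valence G u := by
                intro u hua hue
                by_cases huy : u = y
                · rw [huy, hv_y, hy1]
                · exact moveGraph_valence_other hy1 hhy hey hea huy hua hue
              have hadj_a : ∀ z, (moveGraph G y a e).Adj a z ↔ G.Adj a z ∧ z ≠ y :=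
                moveGraph_adj_v hy1 hhy hey hea (Ne.symm hya)
              have hadj_b : ∀ z, (moveGraph G y a e).Adj b z ↔ G.Adj b z := by
                intro z
                rw [moveGraph_adj_other hy1 hhy hey hea (hab.ne') (Ne.symm heb)]
                constructor
                · rintro (⟨h, -⟩ | ⟨h1, -⟩)
                  · exact h
                  · exact absurd h1.symm hyb
                · intro h
                  exact Or.inl ⟨h, fun hcc => hyb hcc.1.symm⟩
              have hab' : (moveGraph G y a e).Adj a b := by
                rw [hadj_a b]; exact ⟨hab, Ne.symm hyb⟩
              have hJ' : Jinv s a b (moveGraph G y a e) := by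
                refine ⟨hab', ?_, ?_, ?_⟩
                · intro v hva hvb
                  by_cases hve : v = e
                  · rw [hve, hv_e]
                  · rw [hvsame v hva hve]
                    exact hJ.2.1 v hva hvb
                · intro u hu
                  rw [hadj_a u] at hu
                  rcases hJ.2.2.1 u hu.1 with h | h
                  · exact Or.inl h
                  · right
                    have hue : u ≠ e := fun hcc => hnae (hcc ▸ hu.1)
                    have hua : u ≠ a := hu.1.ne'
                    rw [hvsame u hua hue]; exact h
                · intro u u' hu hua hu2 hu' hua' hu2'
                  rw [hadj_b u] at hu
                  rw [hadj_b u'] at hu'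
                  have hue : u ≠ e := fun hcc => hnbe (hcc ▸ hu)
                  have hue' : u' ≠ e := fun hcc => hnbe (hcc ▸ hu')
                  rw [hvsame u hua hue] at hu2
                  rw [hvsame u' hua' hue'] at hu2'
                  exact hJ.2.2.2 u u' hu hua hu2 hu' hua' hu2'
              have hMlt : Mfun s a b (moveGraph G y a e) ≤ n := by
                have h3 : valence (moveGraph G y a e) b = valence G b :=
                  hvsame b (hab.ne') (Ne.symm heb)
                rw [Mfun, if_pos hJ] at hM
                rw [Mfun, if_pos hJ']
                omega
              exact hstep y a e hy1 hhy hse2 hey hea hab' hMlt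
          · -- no path at b : move y from a to x
            push_neg at hc
            have hxy : x ≠ y := by
              rintro rfl
              exact hab.ne' (unique_nbr hy1 hay.symm b hbx.symm)
            have hhy : G.Adj y a := hay.symm
            have hv_a : valence (moveGraph G y a x) a + 1 = valence G a :=
              moveGraph_valence_v hy1 hhy hxy hxa (Ne.symm hya)
            have hv_x : valence (moveGraph G y a x) x = 2 := by
              rw [moveGraph_valence_w hy1 hhy hxy hxa, hx1]
            have hv_y : valence (moveGraph G y a x) y = 1 :=
              moveGraph_valence_x hy1 hhy hxy hxa
            have hvsame : ∀ u, u ≠ a → u ≠ x →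
                valence (moveGraph G y a x) u = valence G u := by
              intro u hua hux
              by_cases huy : u = y
              · rw [huy, hv_y, hy1]
              · exact moveGraph_valence_other hy1 hhy hxy hxa huy hua hux
            have hadj_a : ∀ z, (moveGraph G y a x).Adj a z ↔ G.Adj a z ∧ z ≠ y :=
              moveGraph_adj_v hy1 hhy hxy hxa (Ne.symm hya)
            have hadj_b : ∀ z, (moveGraph G y a x).Adj b z ↔ G.Adj b z := by
              intro z
              rw [moveGraph_adj_other hy1 hhy hxy hxa (hab.ne') (Ne.symm hxb)]
              constructor
              · rintro (⟨h, -⟩ | ⟨h1, -⟩)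
                · exact h
                · exact absurd h1.symm hyb
              · intro h
                exact Or.inl ⟨h, fun hcc => hyb hcc.1.symm⟩
            have hab' : (moveGraph G y a x).Adj a b := by
              rw [hadj_a b]; exact ⟨hab, Ne.symm hyb⟩
            have hJ' : Jinv s a b (moveGraph G y a x) := by
              refine ⟨hab', ?_, ?_, ?_⟩
              · intro v hva hvb
                by_cases hvx : v = x
                · rw [hvx, hv_x]
                · rw [hvsame v hva hvx]
                  exact hJ.2.1 v hva hvb
              · intro u hu
                rw [hadj_a u] at hu
                rcases hJ.2.2.1 u hu.1 with h | h
                · exact Or.inl h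
                · right
                  have hux : u ≠ x := fun hcc => hnax (hcc ▸ hu.1)
                  have hua : u ≠ a := hu.1.ne'
                  rw [hvsame u hua hux]; exact h
              · intro u u' hu hua hu2 hu' hua' hu2'
                rw [hadj_b u] at hu
                rw [hadj_b u'] at hu'
                have hux : u = x := by
                  by_contra hux
                  rw [hvsame u hua hux] at hu2
                  have := hc u hu hua
                  omega
                have hux' : u' = x := by
                  by_contra hux'
                  rw [hvsame u' hua' hux'] at hu2'
                  have := hc u' hu' hua'
                  omega
                rw [hux, hux']
            have hMlt : Mfun s a b (moveGraph G y a x) ≤ n := by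
              have h3 : valence (moveGraph G y a x) b = valence G b :=
                hvsame b (hab.ne') (Ne.symm hxb)
              rw [Mfun, if_pos hJ] at hM
              rw [Mfun, if_pos hJ']
              omega
            exact hstep y a x hy1 hhy hsx hxy hxa hab' hMlt

    · -- phase A
      have hds : ∃ v, v ≠ a ∧ v ≠ b ∧ 2 ≤ valence G v := by
        by_contra hcon
        push_neg at hcon
        apply hJ
        refine ⟨hab, ?_, ?_, ?_⟩
        · intro v hva hvb
          have := hcon v hva hvb
          omega
        · intro u hu
          by_cases hub : u = b
          · exact Or.inl hub
          · right
            have hua : u ≠ a := hu.ne'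
            have := hcon u hua hub
            omega
        · intro u u' hu hua hu2 hu' hua' hu2'
          have hub : u ≠ b := hu.ne'
          have := hcon u hua hub
          omega
      obtain ⟨v0, hv0a, hv0b, hv02⟩ := hds
      have hconn := hG.isConnected
      obtain ⟨e, -, hmax0⟩ := Finset.exists_max_image Finset.univ (G.dist a)
        ⟨a, Finset.mem_univ a⟩
      have hmax : ∀ z, G.dist a z ≤ G.dist a e := fun z => hmax0 z (Finset.mem_univ z)
      have hdab : G.dist a b = 1 := SimpleGraph.dist_eq_one_iff_adj.2 hab
      have hdv0 : 1 ≤ G.dist a v0 := by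
        have : G.dist a v0 ≠ 0 := SimpleGraph.dist_ne_zero_iff_ne_and_reachable.2
          ⟨Ne.symm hv0a, hconn a v0⟩
        omega
      have hd2 : 2 ≤ G.dist a e := by
        by_cases h1 : 2 ≤ G.dist a v0
        · exact le_trans h1 (hmax v0)
        · have hdv1 : G.dist a v0 = 1 := by omega
          have hav0 : G.Adj a v0 := SimpleGraph.dist_eq_one_iff_adj.1 hdv1
          obtain ⟨u2, hu2, hu2a⟩ : ∃ u2, G.Adj v0 u2 ∧ u2 ≠ a := by
            obtain ⟨z1, z2, hz1, hz2, hne⟩ := two_le_valence_iff.1 hv02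
            by_cases hz : z1 = a
            · exact ⟨z2, hz2, fun hq => hne (hz.trans hq.symm)⟩
            · exact ⟨z1, hz1, hz⟩
          have hd' : G.dist a u2 = 2 := by
            rcases dist_adj_step hconn hs (r := a) hu2 with h | h
            · omega
            · exfalso
              have := SimpleGraph.dist_ne_zero_iff_ne_and_reachable.2
                ⟨Ne.symm hu2a, hconn a u2⟩
              omega
          rw [← hd']
          exact hmax u2
      have hea : e ≠ a := by
        rintro rfl
        rw [SimpleGraph.dist_self] at hd2
        omega
      obtain ⟨u0, heu0, hdu0, huniq⟩ := farthest_leaf hG hs hmax hea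
      have he1 : valence G e = 1 := valence_eq_one_of_adj heu0
        (valence_le_one_of_subsingleton
          (fun z z' hz hz' => (huniq z hz).trans (huniq z' hz').symm))
      obtain ⟨x, ux, hx1, hxux, huxa, huxb, hxa, hxb⟩ :
          ∃ x ux, valence G x = 1 ∧ G.Adj x ux ∧ ux ≠ a ∧ ux ≠ b ∧ x ≠ a ∧ x ≠ b := by
        by_cases hd3 : 3 ≤ G.dist a e
        · refine ⟨e, u0, he1, heu0, ?_, ?_, hea, ?_⟩
          · intro h
            rw [h, SimpleGraph.dist_self] at hdu0
            omega
          · intro h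
            rw [h, hdab] at hdu0
            omega
          · intro h
            rw [h, hdab] at hd3
            omega
        · have hd2' : G.dist a e = 2 := by omega
          have hv0d1 : G.dist a v0 = 1 := by
            rcases Nat.lt_or_ge (G.dist a v0) 2 with h | h
            · omega
            · exfalso
              have hv0d2 : G.dist a v0 = 2 := by
                have := hmax v0
                omega
              obtain ⟨z1, z2, hz1, hz2, hne⟩ := two_le_valence_iff.1 hv02
              have hpar : ∀ z, G.Adj v0 z → G.dist a z + 1 = G.dist a v0 := by
                intro z hz
                rcases dist_adj_step hconn hs (r := a) hz with hh | hh
                · have := hmax z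
                  have := hmax v0
                  omega
                · omega
              exact hne (unique_parent hG hz1 hz2 (hpar z1 hz1) (hpar z2 hz2))
          have hav0 : G.Adj a v0 := SimpleGraph.dist_eq_one_iff_adj.1 hv0d1
          obtain ⟨u1, hu1, hu1a⟩ : ∃ u1, G.Adj v0 u1 ∧ u1 ≠ a := by
            obtain ⟨z1, z2, hz1, hz2, hne⟩ := two_le_valence_iff.1 hv02
            by_cases hz : z1 = a
            · exact ⟨z2, hz2, fun hq => hne (hz.trans hq.symm)⟩
            · exact ⟨z1, hz1, hz⟩
          have hdu1 : G.dist a u1 = 2 := by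
            rcases dist_adj_step hconn hs (r := a) hu1 with h | h
            · omega
            · exfalso
              have := SimpleGraph.dist_ne_zero_iff_ne_and_reachable.2
                ⟨Ne.symm hu1a, hconn a u1⟩
              omega
          have hval_u1 : valence G u1 = 1 := by
            refine valence_eq_one_of_adj hu1.symm (all_parents_leaf (r := a) hG ?_)
            intro z hz
            rcases dist_adj_step hconn hs (r := a) hz with hh | hh
            · have := hmax z
              omega
            · omega
          refine ⟨u1, v0, hval_u1, hu1.symm, hv0a, hv0b, ?_, ?_⟩
          · intro h
            rw [h, SimpleGraph.dist_self] at hdu1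
            omega
          · intro h
            rw [h, hdab] at hdu1
            omega
      have hMw : ∀ w' : V, (w' = a ∨ w' = b) → Mfun s a b (moveGraph G x ux w') ≤ n := by
        intro w' hw'
        have hw'x : w' ≠ x := by
          rcases hw' with rfl | rfl
          · exact Ne.symm hxa
          · exact Ne.symm hxb
        have hw'ux : w' ≠ ux := by
          rcases hw' with rfl | rfl
          · exact Ne.symm huxa
          · exact Ne.symm huxb
        have huxx : ux ≠ x := hxux.ne'
        have hv_ux : valence (moveGraph G x ux w') ux + 1 = valence G ux :=
          moveGraph_valence_v hx1 hxux hw'x hw'ux huxx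
        have hvother : ∀ u, u ≠ ux → u ≠ w' →
            valence (moveGraph G x ux w') u = valence G u := by
          intro u hu1 hu2
          by_cases hux' : u = x
          · rw [hux', moveGraph_valence_x hx1 hxux hw'x hw'ux, hx1]
          · exact moveGraph_valence_other hx1 hxux hw'x hw'ux hux' hu1 hu2
        rw [Mfun, if_neg hJ] at hM
        set F := Finset.univ.filter (fun v => v ≠ a ∧ v ≠ b) with hF
        have hux_mem : ux ∈ F := by
          simp only [hF, Finset.mem_filter, Finset.mem_univ, true_and]
          exact ⟨huxa, huxb⟩
        have hcong : ∑ v ∈ F.erase ux, valence (moveGraph G x ux w') v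
            = ∑ v ∈ F.erase ux, valence G v := by
          refine Finset.sum_congr rfl (fun v hv => ?_)
          simp only [Finset.mem_erase, hF, Finset.mem_filter, Finset.mem_univ,
            true_and] at hv
          refine hvother v hv.1 ?_
          rcases hw' with rfl | rfl
          · exact hv.2.1
          · exact hv.2.2
        have hsum : (∑ v ∈ F, valence (moveGraph G x ux w') v) + 1
            = ∑ v ∈ F, valence G v := by
          rw [← Finset.add_sum_erase F _ hux_mem,
            ← Finset.add_sum_erase F (valence G) hux_mem, hcong]
          omega
        by_cases hJ' : Jinv s a b (moveGraph G x ux w')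
        · rw [Mfun, if_pos hJ']
          have h1 := valence_le_card (G := moveGraph G x ux w') a
          have h2 := valence_le_card (G := moveGraph G x ux w') b
          omega
        · rw [Mfun, if_neg hJ', ← hF]
          omega
      have hadjab : ∀ w' : V, (w' = a ∨ w' = b) → (moveGraph G x ux w').Adj a b := by
        intro w' hw'
        have hw'x : w' ≠ x := by
          rcases hw' with rfl | rfl
          · exact Ne.symm hxa
          · exact Ne.symm hxb
        rw [moveGraph_adj (fun h => hw'x h.symm)]
        exact Or.inl ⟨hab, fun hcc => hxa hcc.1.symm, fun hcc => huxa hcc.1.symm⟩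
      by_cases hsw : s ux = s a
      · exact hstep x ux a hx1 hxux hsw.symm (Ne.symm hxa) (Ne.symm huxa)
          (hadjab a (Or.inl rfl)) (hMw a (Or.inl rfl))
      · have hswb : s b = s ux := (bool_third hsw (fun h => hsab h.symm)).symm
        exact hstep x ux b hx1 hxux hswb (Ne.symm hxb) (Ne.symm huxb)
          (hadjab b (Or.inr rfl)) (hMw b (Or.inr rfl))

/-- Any signed finite tree can be transformed into a signed almost linear tree
by a finite sequence of moves, each detaching an end edge and reattaching it at
another vertex of the same sign. -/
theorem signed_tree_to_almost_linear (G : SimpleGraph V) (hG : G.IsTree)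
    (s : V → Bool) (hs : ProperSigning G s) :
    ∃ G' : SimpleGraph V, Relation.ReflTransGen (Move s) G G' ∧
      G'.IsTree ∧ ProperSigning G' s ∧ AlmostLinear G' := by
  by_cases hE : ∃ a b : V, G.Adj a b
  · obtain ⟨a, b, hab⟩ := hE
    exact main_induction s a b (Mfun s a b G) G hG hs hab le_rfl
  · push_neg at hE
    obtain ⟨w⟩ : Nonempty V := hG.isConnected.nonempty
    refine ⟨G, Relation.ReflTransGen.refl, hG, hs, w, ?_, ?_⟩
    · intro v _
      have hz : valence G v = 0 := by
        rw [valence, Finset.card_eq_zero, Finset.filter_eq_empty_iff]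
        intro u _
        exact hE v u
      omega
    · have hz : (Finset.univ.filter fun u => G.Adj w u ∧ 2 ≤ valence G u) = ∅ := by
        rw [Finset.filter_eq_empty_iff]
        intro u _
        intro hcc
        exact hE w u hcc.1
      rw [hz]
      simp
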